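/- Let V be a finite-dimensional real vector space with a filtration 0 ⊊ V^{≤-λ₁} ⊊ ⋯ ⊊ V^{≤-λₙ} = V indexed by strictly positive reals λ₁ > ⋯ > λₙ > 0 (so all weights are strictly negative). Then the space Poly(V,V)^{≤0} of subresonant polynomial self-maps of V (polynomial maps F such that for every linear functional ξ of filtration weight ≤ λ, the pullback F*ξ has filtration weight ≤ λ in Sym•(V*)) is a finite-dimensional vector space. -/
import Mathlib

/-!
Statement 0: For a filtered finite-dimensional real vector space with strictly
negative weights `-λ₁ < ⋯ < -λₙ < 0` (encoded by assigning to the `i`-th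
coordinate the positive dual weight `w i`), the space `Poly(V,V)^{≤0}` of
subresonant polynomial self-maps is a finite-dimensional vector space.
-/

open MvPolynomial

noncomputable section

/-- The total (dual) weight of a monomial `∏ xᵢ^{dᵢ}` : `∑ dᵢ · w i`. -/
def monWeight {n : ℕ} (w : Fin n → ℝ) (d : Fin n →₀ ℕ) : ℝ :=
  d.sum fun i k => (k : ℝ) * w i

/-- The subspace `Sym•(V*)^{≤ c}` of polynomials all of whose monomials have
total dual weight `≤ c`. -/
def weightLE {n : ℕ} (w : Fin n → ℝ) (c : ℝ) : Submodule ℝ (MvPolynomial (Fin n) ℝ) where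
  carrier := {p | ∀ d : Fin n →₀ ℕ, c < monWeight w d → coeff d p = 0}
  zero_mem' := fun d _ => coeff_zero d
  add_mem' := by
    intro p q hp hq d hd
    rw [coeff_add, hp d hd, hq d hd, add_zero]
  smul_mem' := by
    intro c' p hp d hd
    rw [coeff_smul, hp d hd, smul_zero]

/-- `Poly(V,V)^{≤0}`: polynomial self-maps `F = (F_j)_j` such that the pullback of
the weight-`w j` coordinate functional has weight `≤ w j`, i.e. every monomial of
`F j` has weight `≤ w j`. -/
def subresonantSpace {n : ℕ} (w : Fin n → ℝ) :
    Submodule ℝ (Fin n → MvPolynomial (Fin n) ℝ) :=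
  Submodule.pi Set.univ fun j => weightLE w (w j)

/-- If all weights are strictly negative (all dual weights `w i` strictly positive),
then the space of subresonant polynomial self-maps is finite-dimensional. -/
theorem subresonantSpace_finiteDimensional {n : ℕ} (w : Fin n → ℝ) (hw : ∀ i, 0 < w i) :
    FiniteDimensional ℝ (subresonantSpace w) := by
  rcases Nat.eq_zero_or_pos n with hn | hn
  · subst hn
    haveI : Subsingleton (Fin 0 → MvPolynomial (Fin 0) ℝ) :=
      ⟨fun a b => funext fun i => i.elim0⟩
    rw [Subsingleton.elim (subresonantSpace w) ⊥]
    infer_instance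
  · have hne : (Finset.univ : Finset (Fin n)).Nonempty := ⟨⟨0, hn⟩, Finset.mem_univ _⟩
    set m : ℝ := Finset.univ.inf' hne w with hm
    set M : ℝ := Finset.univ.sup' hne w with hM
    have hm0 : 0 < m := by
      rw [hm, Finset.lt_inf'_iff]
      exact fun i _ => hw i
    set N : ℕ := ⌈M / m⌉₊ with hN
    have key : subresonantSpace w ≤
        Submodule.pi Set.univ fun _ : Fin n => restrictTotalDegree (Fin n) ℝ N := by
      intro F hF j _
      show F j ∈ restrictTotalDegree (Fin n) ℝ N
      rw [mem_restrictTotalDegree]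
      apply Finset.sup_le
      intro d hd
      have hco : coeff d (F j) ≠ 0 := mem_support_iff.mp hd
      have hwj : monWeight w d ≤ w j := by
        by_contra h
        exact hco (hF j (Set.mem_univ j) d (lt_of_not_ge h))
      -- m * (degree of d) ≤ monWeight w d ≤ w j ≤ M
      have h1 : (m : ℝ) * (d.sum fun _ e => e : ℕ) ≤ monWeight w d := by
        unfold monWeight
        rw [Finsupp.sum, Finsupp.sum]
        push_cast
        rw [Finset.mul_sum]
        apply Finset.sum_le_sum
        intro i _
        rw [mul_comm]
        exact mul_le_mul_of_nonneg_left
          (Finset.inf'_le _ (Finset.mem_univ i)) (Nat.cast_nonneg _)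
      have h2 : w j ≤ M := Finset.le_sup' _ (Finset.mem_univ j)
      have h3 : ((d.sum fun _ e => e : ℕ) : ℝ) ≤ M / m := by
        rw [le_div_iff₀ hm0, mul_comm]
        exact h1.trans (hwj.trans h2)
      have h4 : ((d.sum fun _ e => e : ℕ) : ℝ) ≤ (N : ℝ) :=
        h3.trans (Nat.le_ceil _)
      exact_mod_cast h4
    haveI : FiniteDimensional ℝ
        (Submodule.pi Set.univ fun _ : Fin n => restrictTotalDegree (Fin n) ℝ N) :=
      Module.Finite.iff_fg.mpr (Submodule.fg_pi fun _ =>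
        Module.Finite.iff_fg.mp inferInstance)
    exact Submodule.finiteDimensional_of_le key
end
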